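/- Lemma 3: Let m ≥ 2, let I and J be finite types, and let A : Fin m → ((Fin m → I) → ℂ) and B : Fin m → ((Fin m → J) → ℂ) be uncorrelated m-tuples of order-m cubic hypermatrices. Then the m-tuple of direct sums (A t ⊕ B t)_{t : Fin m} is an uncorrelated m-tuple over the index type I ⊕ J, and the m-tuple of Kronecker products (A t ⊗ B t)_{t : Fin m} is an uncorrelated m-tuple over the index type I × J. -/

import Mathlib

/-- The BM product of an `m`-tuple of order-`m` cubic hypermatrices over index type `I`. -/
noncomputable def bmProd {m : ℕ} [NeZero m] {I : Type*} [Fintype I] [DecidableEq I]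
    (A : Fin m → ((Fin m → I) → ℂ)) : (Fin m → I) → ℂ :=
  fun i => ∑ j : I, ∏ t : Fin m, A t (Function.update i (t + 1) j)

/-- The Kronecker delta hypermatrix. -/
noncomputable def hDelta {m : ℕ} {I : Type*} [DecidableEq I] : (Fin m → I) → ℂ :=
  fun i => if ∀ s t : Fin m, i s = i t then 1 else 0

open Classical in
/-- The direct sum of order-`m` hypermatrices: `(A ⊕ B)(inl ∘ a) = A a`,
`(A ⊕ B)(inr ∘ b) = B b`, and `0` on mixed indices. -/
noncomputable def hDirectSum {m : ℕ} {I J : Type*}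
    (A : (Fin m → I) → ℂ) (B : (Fin m → J) → ℂ) : (Fin m → I ⊕ J) → ℂ := fun i =>
  if h : ∃ a : Fin m → I, i = Sum.inl ∘ a then A h.choose
  else if h' : ∃ b : Fin m → J, i = Sum.inr ∘ b then B h'.choose
  else 0

/-- The Kronecker product of order-`m` hypermatrices over `I` and `J`. -/
noncomputable def hKron {m : ℕ} {I J : Type*}
    (A : (Fin m → I) → ℂ) (B : (Fin m → J) → ℂ) : (Fin m → I × J) → ℂ :=
  fun i => A (fun t => (i t).1) * B (fun t => (i t).2)

set_option linter.unusedSectionVars false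

section Aux

variable {m : ℕ} [NeZero m] {I J : Type*}

lemma hDS_inl (A : (Fin m → I) → ℂ) (B : (Fin m → J) → ℂ) (a : Fin m → I) :
    hDirectSum A B (Sum.inl ∘ a) = A a := by
  unfold hDirectSum
  rw [dif_pos ⟨a, rfl⟩]
  congr 1
  have h : ∃ a' : Fin m → I, (Sum.inl ∘ a : Fin m → I ⊕ J) = Sum.inl ∘ a' := ⟨a, rfl⟩
  have := h.choose_spec
  funext s
  exact (Sum.inl.inj (congrFun this s)).symm

lemma hDS_inr (A : (Fin m → I) → ℂ) (B : (Fin m → J) → ℂ) (b : Fin m → J) :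
    hDirectSum A B (Sum.inr ∘ b) = B b := by
  unfold hDirectSum
  have hne : ¬ ∃ a : Fin m → I, (Sum.inr ∘ b : Fin m → I ⊕ J) = Sum.inl ∘ a := by
    rintro ⟨a, ha⟩
    exact Sum.inr_ne_inl (congrFun ha 0)
  rw [dif_neg hne, dif_pos ⟨b, rfl⟩]
  congr 1
  have h : ∃ b' : Fin m → J, (Sum.inr ∘ b : Fin m → I ⊕ J) = Sum.inr ∘ b' := ⟨b, rfl⟩
  have := h.choose_spec
  funext s
  exact (Sum.inr.inj (congrFun this s)).symm

lemma hDS_mixed (A : (Fin m → I) → ℂ) (B : (Fin m → J) → ℂ) {i : Fin m → I ⊕ J}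
    {s t : Fin m} {x : I} {y : J} (hx : i s = Sum.inl x) (hy : i t = Sum.inr y) :
    hDirectSum A B i = 0 := by
  unfold hDirectSum
  rw [dif_neg, dif_neg]
  · rintro ⟨b, rfl⟩; exact Sum.inr_ne_inl hx
  · rintro ⟨a, rfl⟩; exact Sum.inl_ne_inr hy

lemma hDelta_prod [DecidableEq I] [DecidableEq J] (i : Fin m → I × J) :
    hDelta i = hDelta (fun s => (i s).1) * hDelta (fun s => (i s).2) := by
  unfold hDelta
  by_cases h : ∀ s t : Fin m, i s = i t
  · rw [if_pos h, if_pos (fun s t => congrArg Prod.fst (h s t)),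
      if_pos (fun s t => congrArg Prod.snd (h s t)), one_mul]
  · rw [if_neg h]
    push_neg at h
    obtain ⟨s, t, hst⟩ := h
    have hst' : (i s).1 ≠ (i t).1 ∨ (i s).2 ≠ (i t).2 := by
      by_contra hc
      push_neg at hc
      exact hst (Prod.ext hc.1 hc.2)
    rcases hst' with h1 | h1
    · rw [if_neg (fun hc : ∀ s t : Fin m, (i s).1 = (i t).1 => h1 (hc s t)), zero_mul]
    · rw [if_neg (fun hc : ∀ s t : Fin m, (i s).2 = (i t).2 => h1 (hc s t)), mul_zero]

lemma hDelta_inl [DecidableEq I] [DecidableEq J] (a : Fin m → I) :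
    (hDelta (Sum.inl ∘ a : Fin m → I ⊕ J)) = hDelta a := by
  unfold hDelta
  simp [Sum.inl.injEq]

lemma hDelta_inr [DecidableEq I] [DecidableEq J] (b : Fin m → J) :
    (hDelta (Sum.inr ∘ b : Fin m → I ⊕ J)) = hDelta b := by
  unfold hDelta
  simp [Sum.inr.injEq]

lemma update_comp_inl (a : Fin m → I) (p : Fin m) (j : I) :
    Function.update (Sum.inl ∘ a : Fin m → I ⊕ J) p (Sum.inl j)
      = Sum.inl ∘ Function.update a p j := by
  funext s
  simp only [Function.update_apply, Function.comp_apply]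
  split <;> rfl

lemma update_comp_inr (b : Fin m → J) (p : Fin m) (j : J) :
    Function.update (Sum.inr ∘ b : Fin m → I ⊕ J) p (Sum.inr j)
      = Sum.inr ∘ Function.update b p j := by
  funext s
  simp only [Function.update_apply, Function.comp_apply]
  split <;> rfl

end Aux
theorem uncorrelated_directSum_and_kron {m : ℕ} [NeZero m] (hm : 2 ≤ m)
    {I J : Type*} [Fintype I] [DecidableEq I] [Fintype J] [DecidableEq J]
    (A : Fin m → ((Fin m → I) → ℂ)) (B : Fin m → ((Fin m → J) → ℂ))
    (hA : bmProd A = hDelta) (hB : bmProd B = hDelta) :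
    bmProd (fun t => hDirectSum (A t) (B t)) = hDelta ∧
    bmProd (fun t => hKron (A t) (B t)) = hDelta := by
  have h01 : (0 : Fin m) ≠ 1 := by
    intro h
    have h2 := congrArg Fin.val h
    rw [Fin.val_zero, Fin.val_one', Nat.mod_eq_of_lt (by omega)] at h2
    omega
  constructor
  · funext i
    by_cases h1 : ∃ a : Fin m → I, i = Sum.inl ∘ a
    · obtain ⟨a, rfl⟩ := h1
      rw [hDelta_inl, ← hA]
      show (∑ j : I ⊕ J, ∏ t : Fin m,
          hDirectSum (A t) (B t) (Function.update (Sum.inl ∘ a) (t + 1) j)) = bmProd A a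
      rw [Fintype.sum_sum_type]
      have hz : ∀ j : J, (∏ t : Fin m,
          hDirectSum (A t) (B t) (Function.update (Sum.inl ∘ a) (t + 1) (Sum.inr j))) = 0 := by
        intro j
        refine Finset.prod_eq_zero (Finset.mem_univ (0 : Fin m)) ?_
        refine hDS_mixed _ _ (s := 0) (t := (0 : Fin m) + 1) (x := a 0) (y := j) ?_ ?_
        · rw [Function.update_of_ne (by simpa using h01)]; rfl
        · rw [Function.update_self]
      simp only [hz, Finset.sum_const_zero, add_zero]
      simp only [update_comp_inl, hDS_inl]
      rfl
    · by_cases h2 : ∃ b : Fin m → J, i = Sum.inr ∘ b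
      · obtain ⟨b, rfl⟩ := h2
        rw [hDelta_inr, ← hB]
        show (∑ j : I ⊕ J, ∏ t : Fin m,
            hDirectSum (A t) (B t) (Function.update (Sum.inr ∘ b) (t + 1) j)) = bmProd B b
        rw [Fintype.sum_sum_type]
        have hz : ∀ j : I, (∏ t : Fin m,
            hDirectSum (A t) (B t) (Function.update (Sum.inr ∘ b) (t + 1) (Sum.inl j))) = 0 := by
          intro j
          refine Finset.prod_eq_zero (Finset.mem_univ (0 : Fin m)) ?_
          refine hDS_mixed _ _ (s := (0 : Fin m) + 1) (t := 0) (x := j) (y := b 0) ?_ ?_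
          · rw [Function.update_self]
          · rw [Function.update_of_ne (by simpa using h01)]; rfl
        simp only [hz, Finset.sum_const_zero, zero_add]
        simp only [update_comp_inr, hDS_inr]
        rfl
      · -- mixed index
        have hsx : ∃ s x, i s = Sum.inl x := by
          by_contra hc
          push_neg at hc
          apply h2
          have hb : ∀ s, ∃ y, i s = Sum.inr y := by
            intro s
            rcases h : i s with x | y
            · exact absurd h (hc s x)
            · exact ⟨y, rfl⟩
          choose b hb using hb
          exact ⟨b, funext hb⟩
        have hty : ∃ t y, i t = Sum.inr y := by
          by_contra hc
          push_neg at hc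
          apply h1
          have ha : ∀ s, ∃ x, i s = Sum.inl x := by
            intro s
            rcases h : i s with x | y
            · exact ⟨x, rfl⟩
            · exact absurd h (hc s y)
          choose a ha using ha
          exact ⟨a, funext ha⟩
        obtain ⟨s, x, hx⟩ := hsx
        obtain ⟨t, y, hy⟩ := hty
        have hst : s ≠ t := by
          intro h; rw [h, hy] at hx; exact Sum.inr_ne_inl hx
        have hdz : hDelta i = 0 := by
          unfold hDelta
          rw [if_neg]
          intro h
          have := h s t
          rw [hx, hy] at this
          exact Sum.inl_ne_inr this
        rw [hdz]
        show (∑ j : I ⊕ J, ∏ u : Fin m,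
            hDirectSum (A u) (B u) (Function.update i (u + 1) j)) = 0
        refine Finset.sum_eq_zero fun j _ => ?_
        rcases j with j | j
        · refine Finset.prod_eq_zero (Finset.mem_univ (s - 1)) ?_
          have hss : s - 1 + 1 = s := sub_add_cancel s 1
          rw [hss]
          refine hDS_mixed _ _ (s := s) (t := t) (x := j) (y := y) ?_ ?_
          · rw [Function.update_self]
          · rw [Function.update_of_ne (Ne.symm hst)]; exact hy
        · refine Finset.prod_eq_zero (Finset.mem_univ (t - 1)) ?_
          have htt : t - 1 + 1 = t := sub_add_cancel t 1
          rw [htt]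
          refine hDS_mixed _ _ (s := s) (t := t) (x := x) (y := j) ?_ ?_
          · rw [Function.update_of_ne hst]; exact hx
          · rw [Function.update_self]
  · -- Kronecker part
    funext i
    rw [hDelta_prod, ← hA, ← hB]
    show (∑ j : I × J, ∏ t : Fin m,
        hKron (A t) (B t) (Function.update i (t + 1) j)) =
      bmProd A (fun s => (i s).1) * bmProd B (fun s => (i s).2)
    unfold bmProd
    rw [Finset.sum_mul_sum, Fintype.sum_prod_type]
    refine Finset.sum_congr rfl fun a _ => ?_
    refine Finset.sum_congr rfl fun b _ => ?_
    rw [← Finset.prod_mul_distrib]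
    refine Finset.prod_congr rfl fun t _ => ?_
    unfold hKron
    congr 1
    · congr 1
      funext u
      simp only [Function.update_apply]
      split <;> rfl
    · congr 1
      funext u
      simp only [Function.update_apply]
      split <;> rfl
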